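/- For every natural number n, C_n·C_{n+2} − C_{n+1}² = 6·(2n)!·(2n+2)! / (n!·(n+1)!·(n+2)!·(n+3)!), where C_n is the n-th Catalan number. -/
import Mathlib

lemma catalan_q (n : ℕ) :
    (catalan n : ℚ) = (Nat.factorial (2*n)) / ((Nat.factorial n) * (Nat.factorial (n+1))) := by
  have h := succ_mul_catalan_eq_centralBinom n
  have hc : ((n+1 : ℕ) : ℚ) * catalan n = Nat.centralBinom n := by
    exact_mod_cast congrArg (Nat.cast : ℕ → ℚ) h
  have hb : (Nat.centralBinom n : ℚ) =
      (Nat.factorial (2*n)) / ((Nat.factorial n) * (Nat.factorial n)) := by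
    rw [Nat.centralBinom, Nat.cast_choose ℚ (by omega : n ≤ 2*n),
      show 2*n - n = n by omega]
  have h1 : ((Nat.factorial n : ℚ)) ≠ 0 := by positivity
  have h2 : ((n : ℚ) + 1) ≠ 0 := by positivity
  rw [Nat.factorial_succ]
  push_cast at hc ⊢
  field_simp at hc ⊢
  rw [hb] at hc
  field_simp at hc
  linarith [hc]

theorem catalan_diff_formula (n : ℕ) :
    (catalan n : ℚ) * (catalan (n+2)) - (catalan (n+1))^2 =
      6 * (Nat.factorial (2*n) : ℚ) * (Nat.factorial (2*n+2)) /
        ((Nat.factorial n) * (Nat.factorial (n+1)) * (Nat.factorial (n+2)) *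
         (Nat.factorial (n+3))) := by
  rw [catalan_q, catalan_q, catalan_q]
  have e1 : 2*(n+1) = 2*n + 2 := by ring
  have e2 : 2*(n+2) = 2*n + 4 := by ring
  rw [e1, e2]
  have f1 : (Nat.factorial (n+1) : ℚ) = (n+1) * Nat.factorial n := by
    rw [Nat.factorial_succ]; push_cast; ring
  have f2 : (Nat.factorial (n+2) : ℚ) = (n+2) * Nat.factorial (n+1) := by
    rw [show n+2 = (n+1)+1 from rfl, Nat.factorial_succ]; push_cast; ring
  have f3 : (Nat.factorial (n+3) : ℚ) = (n+3) * Nat.factorial (n+2) := by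
    rw [show n+3 = (n+2)+1 from rfl, Nat.factorial_succ]; push_cast; ring
  have g1 : (Nat.factorial (2*n+2) : ℚ) = (2*n+2) * (2*n+1) * Nat.factorial (2*n) := by
    rw [show 2*n+2 = (2*n+1)+1 from rfl, Nat.factorial_succ, Nat.factorial_succ]
    push_cast; ring
  have g2 : (Nat.factorial (2*n+4) : ℚ) = (2*n+4) * (2*n+3) * Nat.factorial (2*n+2) := by
    rw [show 2*n+4 = (2*n+3)+1 from rfl, Nat.factorial_succ, Nat.factorial_succ]
    push_cast; ring
  rw [g2, g1, f3, f2, f1]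
  have h0 : (Nat.factorial n : ℚ) ≠ 0 := by positivity
  have h1 : (Nat.factorial (2*n) : ℚ) ≠ 0 := by positivity
  have p1 : ((n:ℚ)+1) ≠ 0 := by positivity
  have p2 : ((n:ℚ)+2) ≠ 0 := by positivity
  have p3 : ((n:ℚ)+3) ≠ 0 := by positivity
  field_simp
  ring
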